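/- arXiv:1303.3547 — 2 statements merged into one kernel-verified Lean document; each statement's English description precedes it below -/
import Mathlib

section
/- Let M ≥ 1 and 0 ≤ v < M be integers and let A be an M×M complex Toeplitz matrix, i.e., there is a function g : ℤ → ℂ with A_{i,j} = g(i − j) for all 0 ≤ i, j < M. Then J⁰(v)·A·(J⁰(v))^H + J¹(v)·A·(J¹(v))^H = A ⊙ Υ(v), where ⊙ is the entrywise (Hadamard) product. -/
open Matrix

/-- The shift matrix `J⁰(v)`: entry `(i,j)` is `1` iff `i < v` and `j = M - v + i`. -/
noncomputable def J0 (M v : ℕ) : Matrix (Fin M) (Fin M) ℂ :=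
  Matrix.of fun i j => if (i : ℕ) < v ∧ (j : ℕ) = M - v + (i : ℕ) then 1 else 0

/-- The shift matrix `J¹(v)`: entry `(i,j)` is `1` iff `v ≤ i` and `j = i - v`. -/
noncomputable def J1 (M v : ℕ) : Matrix (Fin M) (Fin M) ℂ :=
  Matrix.of fun i j => if v ≤ (i : ℕ) ∧ (j : ℕ) = (i : ℕ) - v then 1 else 0

/-- The masking matrix `Υ(v)`: block diagonal with an all-ones `v × v` block and an
all-ones `(M-v) × (M-v)` block. -/
noncomputable def Ups (M v : ℕ) : Matrix (Fin M) (Fin M) ℂ :=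
  Matrix.of fun i j =>
    if ((i : ℕ) < v ∧ (j : ℕ) < v) ∨ (v ≤ (i : ℕ) ∧ v ≤ (j : ℕ)) then 1 else 0

theorem stmt2 (M : ℕ) (hM : 0 < M) (v : ℕ) (hv : v < M)
    (A : Matrix (Fin M) (Fin M) ℂ) (g : ℤ → ℂ)
    (hA : ∀ i j : Fin M, A i j = g (((i : ℕ) : ℤ) - ((j : ℕ) : ℤ))) :
    J0 M v * A * (J0 M v)ᴴ + J1 M v * A * (J1 M v)ᴴ = A.hadamard (Ups M v) := by
  ext i j
  have e0 : (J0 M v * A * (J0 M v)ᴴ) i j =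
      if (i:ℕ) < v ∧ (j:ℕ) < v then A i j else 0 := by
    rw [mul_apply]
    by_cases hj : (j:ℕ) < v
    · have hjM : M - v + (j:ℕ) < M := by omega
      rw [Finset.sum_eq_single (⟨M - v + j, hjM⟩ : Fin M)]
      · rw [mul_apply]
        by_cases hi : (i:ℕ) < v
        · have hiM : M - v + (i:ℕ) < M := by omega
          rw [Finset.sum_eq_single (⟨M - v + i, hiM⟩ : Fin M)]
          · simp only [J0, of_apply, conjTranspose_apply, hA]
            simp only [hi, hj, and_true, if_true, star_one, one_mul, mul_one, if_pos (⟨hi, hj⟩ : _ ∧ _)]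
            congr 1
            omega
          · intro b _ hb
            have : ¬((i:ℕ) < v ∧ (b:ℕ) = M - v + (i:ℕ)) := by
              intro h
              exact hb (Fin.ext h.2)
            simp [J0, this]
          · intro h; exact absurd (Finset.mem_univ _) h
        · have : ∀ k : Fin M, (J0 M v) i k = 0 := by
            intro k; simp [J0, hi]
          simp [this, hi]
      · intro b _ hb
        have : ¬(v ≤ M ∧ (b:ℕ) = M - v + (j:ℕ)) := by
          intro h; exact hb (Fin.ext h.2)
        have hz : (J0 M v)ᴴ b j = 0 := by
          simp only [conjTranspose_apply, J0, of_apply]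
          rw [if_neg]
          · simp
          · intro h; exact hb (Fin.ext h.2)
        rw [hz, mul_zero]
      · intro h; exact absurd (Finset.mem_univ _) h
    · have hz : ∀ k : Fin M, (J0 M v) j k = 0 := by
        intro k; simp [J0, hj]
      simp [hz, hj]
  have e1 : (J1 M v * A * (J1 M v)ᴴ) i j =
      if v ≤ (i:ℕ) ∧ v ≤ (j:ℕ) then A i j else 0 := by
    rw [mul_apply]
    by_cases hj : v ≤ (j:ℕ)
    · have hjM : (j:ℕ) - v < M := by omega
      rw [Finset.sum_eq_single (⟨(j:ℕ) - v, hjM⟩ : Fin M)]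
      · rw [mul_apply]
        by_cases hi : v ≤ (i:ℕ)
        · have hiM : (i:ℕ) - v < M := by omega
          rw [Finset.sum_eq_single (⟨(i:ℕ) - v, hiM⟩ : Fin M)]
          · simp only [J1, of_apply, conjTranspose_apply, hA]
            simp only [hi, hj, and_true, if_true, star_one, one_mul, mul_one, if_pos (⟨hi, hj⟩ : _ ∧ _)]
            congr 1
            omega
          · intro b _ hb
            have : ¬(v ≤ (i:ℕ) ∧ (b:ℕ) = (i:ℕ) - v) := by
              intro h; exact hb (Fin.ext h.2)
            simp [J1, this]
          · intro h; exact absurd (Finset.mem_univ _) h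
        · have : ∀ k : Fin M, (J1 M v) i k = 0 := by
            intro k; simp [J1, hi]
          simp [this, hi]
      · intro b _ hb
        have hz : (J1 M v)ᴴ b j = 0 := by
          simp only [conjTranspose_apply, J1, of_apply]
          rw [if_neg]
          · simp
          · intro h; exact hb (Fin.ext h.2)
        rw [hz, mul_zero]
      · intro h; exact absurd (Finset.mem_univ _) h
    · have hz : ∀ k : Fin M, (J1 M v) j k = 0 := by
        intro k; simp [J1, hj]
      simp [hz, hj]
  rw [Matrix.add_apply, e0, e1, hadamard_apply, Ups, of_apply]
  by_cases hi : (i:ℕ) < v <;> by_cases hj : (j:ℕ) < v <;>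
    simp [hi, hj, not_lt.mp, le_of_not_gt] <;> omega
end

section
/- Let N ≥ 1, L_p ≥ 0, M = N + L_p, P_I ≥ 1 be integers, let 0 ≤ c < N, let p be an integer, and let 0 ≤ v < M. With Ψ_{p,c} := Λ(p)·f_c f_c^H·Λ(p)^H, it holds that J⁰(v)·Ψ_{p,c}·(J⁰(v))^H + J¹(v)·Ψ_{p,c}·(J¹(v))^H = Ψ_{p,c} ⊙ Υ(v), where ⊙ is the entrywise (Hadamard) product. -/
open Matrix

/-- The OFDM subcarrier vector `f_c ∈ ℂ^{N+Lp}` with entries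
`f_c(m) = N^{-1/2} exp(2πi c (m - Lp) / N)`. -/
noncomputable def fc (N Lp c : ℕ) : Fin (N + Lp) → ℂ := fun m =>
  (1 / Real.sqrt N : ℝ) *
    Complex.exp (2 * (Real.pi : ℂ) * Complex.I * (c : ℂ) *
      (((((m : ℕ) : ℤ) - (Lp : ℤ)) : ℤ) : ℂ) / (N : ℂ))

/-- The diagonal Doppler matrix `Λ(p)` with `m`-th diagonal entry `exp(2πi p m / (P_I N))`. -/
noncomputable def Lam (N Lp PI : ℕ) (p : ℤ) : Matrix (Fin (N + Lp)) (Fin (N + Lp)) ℂ :=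
  Matrix.diagonal fun m =>
    Complex.exp (2 * (Real.pi : ℂ) * Complex.I * (p : ℂ) * ((m : ℕ) : ℂ) / ((PI : ℂ) * (N : ℂ)))

/-- The matrix `Ψ_{p,c} = Λ(p) · f_c f_cᴴ · Λ(p)ᴴ`. -/
noncomputable def PsiPC (N Lp PI : ℕ) (p : ℤ) (c : ℕ) :
    Matrix (Fin (N + Lp)) (Fin (N + Lp)) ℂ :=
  Lam N Lp PI p * vecMulVec (fc N Lp c) (star (fc N Lp c)) * (Lam N Lp PI p)ᴴ

lemma psi_apply (N Lp PI : ℕ) (p : ℤ) (c : ℕ) (a b : Fin (N + Lp)) :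
    PsiPC N Lp PI p c a b =
      ((1 / Real.sqrt N : ℝ) : ℂ)^2 *
        Complex.exp (2 * (Real.pi : ℂ) * Complex.I * (p : ℂ) * ((a : ℂ) - (b : ℂ)) / ((PI : ℂ) * (N : ℂ))
          + 2 * (Real.pi : ℂ) * Complex.I * (c : ℂ) * ((a : ℂ) - (b : ℂ)) / (N : ℂ)) := by
  simp only [PsiPC, Lam, diagonal_conjTranspose, Matrix.mul_diagonal, Matrix.diagonal_mul,
    vecMulVec_apply, Pi.star_apply, fc, star_mul', RCLike.star_def, Complex.conj_ofReal,
    ← Complex.exp_conj, map_div₀, _root_.map_mul, map_sub, Complex.conj_I, map_ofNat, Complex.conj_ofReal,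
    map_natCast, map_intCast, Pi.star_def]
  push_cast
  rw [show ∀ s x y z w : ℂ, Complex.exp x * (s * Complex.exp y *
      (s * Complex.exp z)) * Complex.exp w =
      s^2 * Complex.exp (x+y+z+w) from by
    intro s x y z w; rw [Complex.exp_add, Complex.exp_add, Complex.exp_add]; ring]
  congr 1
  ring_nf

lemma J0_mul_apply {M v : ℕ} (hv : v < M) (A : Matrix (Fin M) (Fin M) ℂ) (i l : Fin M) :
    (J0 M v * A) i l = if h : (i : ℕ) < v then A ⟨M - v + i, by omega⟩ l else 0 := by
  rw [mul_apply]
  by_cases h : (i : ℕ) < v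
  · rw [dif_pos h]
    rw [Finset.sum_eq_single (⟨M - v + i, by omega⟩ : Fin M)]
    · simp [J0, h]
    · intro b _ hb
      simp only [J0, Matrix.of_apply, h, true_and]
      rw [if_neg, zero_mul]
      intro hb'; exact hb (Fin.ext hb')
    · simp
  · rw [dif_neg h]
    apply Finset.sum_eq_zero
    intro k _
    simp [J0, h]

lemma mul_J0H_apply {M v : ℕ} (hv : v < M) (A : Matrix (Fin M) (Fin M) ℂ) (i j : Fin M) :
    (A * (J0 M v)ᴴ) i j = if h : (j : ℕ) < v then A i ⟨M - v + j, by omega⟩ else 0 := by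
  rw [mul_apply]
  by_cases h : (j : ℕ) < v
  · rw [dif_pos h]
    rw [Finset.sum_eq_single (⟨M - v + j, by omega⟩ : Fin M)]
    · simp [J0, conjTranspose_apply, h]
    · intro b _ hb
      simp only [J0, conjTranspose_apply, Matrix.of_apply, h, true_and]
      rw [if_neg, star_zero, mul_zero]
      intro hb'; exact hb (Fin.ext hb')
    · simp
  · rw [dif_neg h]
    apply Finset.sum_eq_zero
    intro k _
    simp [J0, conjTranspose_apply, h]

lemma J1_mul_apply {M v : ℕ} (hv : v < M) (A : Matrix (Fin M) (Fin M) ℂ) (i l : Fin M) :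
    (J1 M v * A) i l = if h : v ≤ (i : ℕ) then A ⟨(i : ℕ) - v, by omega⟩ l else 0 := by
  rw [mul_apply]
  by_cases h : v ≤ (i : ℕ)
  · rw [dif_pos h]
    rw [Finset.sum_eq_single (⟨(i : ℕ) - v, by omega⟩ : Fin M)]
    · simp [J1, h]
    · intro b _ hb
      simp only [J1, Matrix.of_apply, h, true_and]
      rw [if_neg, zero_mul]
      intro hb'; exact hb (Fin.ext hb')
    · simp
  · rw [dif_neg h]
    apply Finset.sum_eq_zero
    intro k _
    simp [J1, h]

lemma mul_J1H_apply {M v : ℕ} (hv : v < M) (A : Matrix (Fin M) (Fin M) ℂ) (i j : Fin M) :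
    (A * (J1 M v)ᴴ) i j = if h : v ≤ (j : ℕ) then A i ⟨(j : ℕ) - v, by omega⟩ else 0 := by
  rw [mul_apply]
  by_cases h : v ≤ (j : ℕ)
  · rw [dif_pos h]
    rw [Finset.sum_eq_single (⟨(j : ℕ) - v, by omega⟩ : Fin M)]
    · simp [J1, conjTranspose_apply, h]
    · intro b _ hb
      simp only [J1, conjTranspose_apply, Matrix.of_apply, h, true_and]
      rw [if_neg, star_zero, mul_zero]
      intro hb'; exact hb (Fin.ext hb')
    · simp
  · rw [dif_neg h]
    apply Finset.sum_eq_zero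
    intro k _
    simp [J1, conjTranspose_apply, h]

lemma psi_shift (N Lp PI : ℕ) (p : ℤ) (c : ℕ) (a b a' b' : Fin (N + Lp))
    (h : ((a : ℕ) : ℤ) - (b : ℕ) = ((a' : ℕ) : ℤ) - (b' : ℕ)) :
    PsiPC N Lp PI p c a b = PsiPC N Lp PI p c a' b' := by
  have hC : ((a : ℕ) : ℂ) - ((b : ℕ) : ℂ) = ((a' : ℕ) : ℂ) - ((b' : ℕ) : ℂ) := by
    exact_mod_cast congrArg (Int.cast : ℤ → ℂ) h
  rw [psi_apply, psi_apply, hC]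

theorem stmt4 (N Lp PI : ℕ) (hN : 0 < N) (hPI : 0 < PI) (c : ℕ) (hc : c < N) (p : ℤ)
    (v : ℕ) (hv : v < N + Lp) :
    J0 (N + Lp) v * PsiPC N Lp PI p c * (J0 (N + Lp) v)ᴴ +
      J1 (N + Lp) v * PsiPC N Lp PI p c * (J1 (N + Lp) v)ᴴ =
    (PsiPC N Lp PI p c).hadamard (Ups (N + Lp) v) := by
  ext i j
  rw [Matrix.add_apply, mul_J0H_apply hv, mul_J1H_apply hv,
    Matrix.hadamard_apply]
  by_cases hi : (i : ℕ) < v <;> by_cases hj : (j : ℕ) < v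
  · rw [dif_pos hj, J0_mul_apply hv, dif_pos hi, dif_neg (by omega), add_zero,
      psi_shift N Lp PI p c _ _ i j (by simp only [Fin.val_mk]; omega)]
    simp [Ups, hi, hj]
  · rw [dif_neg hj, dif_pos (show v ≤ (j : ℕ) by omega), J1_mul_apply hv,
      dif_neg (show ¬ v ≤ (i : ℕ) by omega), zero_add]
    simp only [Ups, Matrix.of_apply]
    rw [if_neg (by omega), mul_zero]
  · rw [dif_pos hj, J0_mul_apply hv, dif_neg hi, dif_neg (show ¬ v ≤ (j : ℕ) by omega), add_zero]
    simp only [Ups, Matrix.of_apply]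
    rw [if_neg (by omega), mul_zero]
  · rw [dif_neg hj, dif_pos (show v ≤ (j : ℕ) by omega), zero_add, J1_mul_apply hv,
      dif_pos (show v ≤ (i : ℕ) by omega),
      psi_shift N Lp PI p c _ _ i j (by simp only [Fin.val_mk]; omega)]
    simp [Ups, not_lt.mp hi, not_lt.mp hj]
end
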